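/- For G = G(m,n,k) with trivial centre and S a base: every orbit orb(x, S*) with x ∈ S* meets S (i.e., is basic) if and only if Σ_G(S) is complete, and in that case Σ_G(S) is the disjoint union over x ∈ S* of the maximal containers C(x,1), so |Σ_G(S)| = m·|S*|. -/

import Mathlib

/-- `n = ind_m(k)`: `n` is the least positive integer with `k^n ≡ 1 (mod m)`. -/
def IsIndex (m k n : ℕ) : Prop :=
  0 < n ∧ k ^ n ≡ 1 [MOD m] ∧ ∀ d : ℕ, 0 < d → k ^ d ≡ 1 [MOD m] → n ≤ d

/-- The mu-map `μ(x,y)` of `G = G(m,n,k)`, acting on elements of `G` written in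
the normal form `a^i b^j` (identified with pairs `(i,j) ∈ ℤ_m × ℤ_n`):
`(a^i b^j) μ(x,y) = a^N` with `N ≡ x·i·k^j − y·(k^j − 1) (mod m)`. -/
def Mu (m n k : ℕ) (x y : ZMod m) : Function.End (ZMod m × ZMod n) :=
  fun p => (x * p.1 * (k : ZMod m) ^ p.2.val -
    y * ((k : ZMod m) ^ p.2.val - 1), 0)

/-- The container `C(x,y) = {μ(x, yz) : z ∈ ℤ_m}`. -/
def Container (m n k : ℕ) (x y : ZMod m) :
    Set (Function.End (ZMod m × ZMod n)) :=
  {f | ∃ z : ZMod m, f = Mu m n k x (y * z)}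
/-- The multiplicative closure `S*` of `S` in `ℤ_m`. -/
def mulClosure (m : ℕ) (S : Set (ZMod m)) : Set (ZMod m) :=
  Subsemigroup.closure S

/-- `S ⊆ ℤ_m` is a base if it contains `0` and at least one unit of `ℤ_m`. -/
def IsBase (m : ℕ) (S : Set (ZMod m)) : Prop :=
  (0 : ZMod m) ∈ S ∧ ∃ u ∈ S, IsUnit u

/-- The set `Γ_μ(S) = {μ(s,z) : s ∈ S, z ∈ ℤ_m}` of mu-generators. -/
def GammaMu (m n k : ℕ) (S : Set (ZMod m)) :
    Set (Function.End (ZMod m × ZMod n)) :=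
  {f | ∃ s ∈ S, ∃ z : ZMod m, f = Mu m n k s z}

/-- The set `Π_μ(S) = {μ(s·s*, s*·z) : s ∈ S, s* ∈ S*, z ∈ ℤ_m}` of
mu-products. -/
def PiMu (m n k : ℕ) (S : Set (ZMod m)) :
    Set (Function.End (ZMod m × ZMod n)) :=
  {f | ∃ s ∈ S, ∃ t ∈ mulClosure m S, ∃ z : ZMod m,
    f = Mu m n k (s * t) (t * z)}

/-- The `G`-semigroup `Σ_G(S)`: the subsemigroup of `M(G)` (under composition)
generated by `Γ_μ(S)`. -/
def SigmaG (m n k : ℕ) (S : Set (ZMod m)) :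
    Set (Function.End (ZMod m × ZMod n)) :=
  Subsemigroup.closure (GammaMu m n k S)
/-- The orbit `orb(x, S*) = {x·u : u ∈ I(S*)}`, where `I(S*)` is the set of
units of `ℤ_m` lying in `S*`. -/
def orb (m : ℕ) (S : Set (ZMod m)) (x : ZMod m) : Set (ZMod m) :=
  {w | ∃ u ∈ mulClosure m S, IsUnit u ∧ w = x * u}

lemma mu_mul (m n k : ℕ) (x y x' y' : ZMod m) :
    Mu m n k x y * Mu m n k x' y' = Mu m n k (x * x') (x * y') := by
  funext p
  show Mu m n k x y (Mu m n k x' y' p) = _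
  simp only [Mu, ZMod.val_zero, pow_zero]
  refine Prod.ext ?_ rfl
  ring


lemma pow_mem_closure (m : ℕ) (S : Set (ZMod m)) {u : ZMod m} (hu : u ∈ mulClosure m S)
    {d : ℕ} (hd : 0 < d) : u ^ d ∈ mulClosure m S := by
  induction d with
  | zero => exact absurd hd (by simp)
  | succ j ih =>
    rcases Nat.eq_zero_or_pos j with h | h
    · simpa [h]
    · rw [pow_succ]
      exact Subsemigroup.mul_mem _ (ih h) hu


lemma exists_inv (m : ℕ) (hm : 0 < m) (S : Set (ZMod m)) {u : ZMod m}
    (hu : u ∈ mulClosure m S) (hun : IsUnit u) :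
    ∃ w ∈ mulClosure m S, u * w = 1 := by
  haveI : NeZero m := ⟨hm.ne'⟩
  obtain ⟨v, rfl⟩ := hun
  have hd : 0 < orderOf v := orderOf_pos v
  refine ⟨(v : ZMod m) ^ (2 * orderOf v - 1), pow_mem_closure m S hu (by omega), ?_⟩
  have : (v : ZMod m) * (v : ZMod m) ^ (2 * orderOf v - 1) = (v : ZMod m) ^ (2 * orderOf v) := by
    rw [← pow_succ']
    congr 1
    omega
  rw [this, ← Units.val_pow_eq_pow_val, two_mul, pow_add, pow_orderOf_eq_one, one_mul,
    Units.val_one]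

lemma mu_inj (m n k : ℕ) (hm : 1 < m) (hk : 0 < k)
    (hcop : Nat.gcd m (k - 1) = 1) (hind : IsIndex m k n)
    {x y x' y' : ZMod m} (h : Mu m n k x y = Mu m n k x' y') : x = x' ∧ y = y' := by
  haveI : NeZero m := ⟨by omega⟩
  haveI : Fact (1 < m) := ⟨hm⟩
  haveI : NeZero n := ⟨hind.1.ne'⟩
  have hk1 : 1 < k := by
    rcases Nat.lt_or_ge k 2 with h2 | h2
    · interval_cases k
      simp at hcop; omega
    · omega
  have hKu : IsUnit ((k : ZMod m) - 1) := by
    have : ((k : ZMod m) - 1) = ((k - 1 : ℕ) : ZMod m) := by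
      have : (k : ℕ) = (k - 1) + 1 := by omega
      rw [this]; push_cast; ring
    rw [this]
    rw [ZMod.isUnit_iff_coprime]
    exact Nat.coprime_comm.mp hcop
  have hn2 : 1 < n := by
    rcases Nat.lt_or_ge n 2 with h2 | h2
    · have hn1 : n = 1 := by have := hind.1; omega
      exfalso
      have hmod : k ≡ 1 [MOD m] := by have := hind.2.1; rwa [hn1, pow_one] at this
      have : (k : ZMod m) = 1 := by
        have := (ZMod.natCast_eq_natCast_iff k 1 m).mpr hmod
        simpa using this
      rw [this, sub_self] at hKu
      rw [isUnit_zero_iff] at hKu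
      exact zero_ne_one hKu
    · omega
  haveI : Fact (1 < n) := ⟨hn2⟩
  have h1 := congrArg (fun f => (f ((1 : ZMod m), (0 : ZMod n))).1) h
  simp only [Mu, ZMod.val_zero, pow_zero, mul_one, sub_self, mul_zero, sub_zero] at h1
  have h2 := congrArg (fun f => (f ((0 : ZMod m), (1 : ZMod n))).1) h
  simp only [Mu, ZMod.val_one, pow_one, mul_zero, zero_mul, zero_sub, neg_inj] at h2
  refine ⟨h1, ?_⟩
  exact hKu.mul_left_cancel (by rw [mul_comm, h2, mul_comm])

lemma sigma_mem (m n k : ℕ) (S : Set (ZMod m)) (f : Function.End (ZMod m × ZMod n)) :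
    f ∈ SigmaG m n k S ↔
      (∃ s ∈ S, ∃ z : ZMod m, f = Mu m n k s z) ∨
      (∃ t ∈ mulClosure m S, ∃ s ∈ S, ∃ z : ZMod m, f = Mu m n k (t * s) (t * z)) := by
  constructor
  · intro hf
    refine Subsemigroup.closure_induction (p := fun g _ =>
      (∃ s ∈ S, ∃ z : ZMod m, g = Mu m n k s z) ∨
      (∃ t ∈ mulClosure m S, ∃ s ∈ S, ∃ z : ZMod m, g = Mu m n k (t * s) (t * z)))
      (fun g hg => Or.inl hg) ?_ hf
    rintro g h _ _ (⟨a, ha, b, rfl⟩ | ⟨t, ht, a, ha, b, rfl⟩)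
      (⟨c, hc, d, rfl⟩ | ⟨t', ht', c, hc, d, rfl⟩)
    · exact Or.inr ⟨a, Subsemigroup.subset_closure ha, c, hc, d, by rw [mu_mul]⟩
    · refine Or.inr ⟨a * t', Subsemigroup.mul_mem _ (Subsemigroup.subset_closure ha) ht',
        c, hc, d, ?_⟩
      rw [mu_mul]; ring_nf
    · refine Or.inr ⟨t * a, Subsemigroup.mul_mem _ ht (Subsemigroup.subset_closure ha),
        c, hc, d, ?_⟩
      rw [mu_mul]
    · refine Or.inr ⟨t * a * t', Subsemigroup.mul_mem _
        (Subsemigroup.mul_mem _ ht (Subsemigroup.subset_closure ha)) ht', c, hc, d, ?_⟩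
      rw [mu_mul]; ring_nf
  · rintro (⟨s, hs, z, rfl⟩ | ⟨t, ht, s, hs, z, rfl⟩)
    · exact Subsemigroup.subset_closure ⟨s, hs, z, rfl⟩
    · have key : ∀ t ∈ Subsemigroup.closure S, ∀ x z : ZMod m,
          Mu m n k x z ∈ SigmaG m n k S → Mu m n k (t * x) (t * z) ∈ SigmaG m n k S := by
        intro t ht
        refine Subsemigroup.closure_induction (p := fun t _ => ∀ x z : ZMod m,
          Mu m n k x z ∈ SigmaG m n k S → Mu m n k (t * x) (t * z) ∈ SigmaG m n k S)
          ?_ ?_ ht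
        · intro a ha x z hx
          rw [← mu_mul m n k a 0 x z]
          exact Subsemigroup.mul_mem _ (Subsemigroup.subset_closure ⟨a, ha, 0, rfl⟩) hx
        · intro a b _ _ pa pb x z hx
          have := pa (b * x) (b * z) (pb x z hx)
          rwa [← mul_assoc, ← mul_assoc] at this
      exact key t ht s z (Subsemigroup.subset_closure ⟨s, hs, z, rfl⟩)

lemma one_mem_closure (m : ℕ) (hm : 0 < m) (S : Set (ZMod m)) (hS : IsBase m S) :
    (1 : ZMod m) ∈ mulClosure m S := by
  obtain ⟨-, u0, hu0S, hu0⟩ := hS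
  have hu0c : u0 ∈ mulClosure m S := Subsemigroup.subset_closure hu0S
  obtain ⟨w0, hw0, hw0e⟩ := exists_inv m hm S hu0c hu0
  exact hw0e ▸ Subsemigroup.mul_mem _ hu0c hw0

/-- every orbit `orb(x,S*)`, `x ∈ S*`, meets `S` (is basic) iff
`Σ_G(S)` is complete (i.e. `C(x,1) ⊆ Σ_G(S)` for all `x ∈ S*`); and in that
case `Σ_G(S)` is the disjoint union over `x ∈ S*` of the maximal containers
`C(x,1)`, so that `|Σ_G(S)| = m·|S*|`. -/
theorem stmt_17 (m n k : ℕ) (hm : 0 < m) (hk : 0 < k)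
    (hcop : Nat.gcd m (k - 1) = 1) (hind : IsIndex m k n)
    (S : Set (ZMod m)) (hS : IsBase m S) :
    ((∀ x ∈ mulClosure m S, (orb m S x ∩ S).Nonempty) ↔
        ∀ x ∈ mulClosure m S, Container m n k x 1 ⊆ SigmaG m n k S) ∧
      ((∀ x ∈ mulClosure m S, (orb m S x ∩ S).Nonempty) →
        (SigmaG m n k S = ⋃ x ∈ mulClosure m S, Container m n k x 1) ∧
        ((mulClosure m S).Pairwise fun x₁ x₂ =>
          Disjoint (Container m n k x₁ 1) (Container m n k x₂ 1)) ∧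
        (SigmaG m n k S).ncard = m * (mulClosure m S).ncard) := by
  haveI : NeZero m := ⟨hm.ne'⟩
  have h1mem : (1 : ZMod m) ∈ mulClosure m S := one_mem_closure m hm S hS
  -- forward direction
  have fwd : (∀ x ∈ mulClosure m S, (orb m S x ∩ S).Nonempty) →
      ∀ x ∈ mulClosure m S, Container m n k x 1 ⊆ SigmaG m n k S := by
    intro hbasic x hx f hf
    obtain ⟨y, ⟨u, huS, huU, rfl⟩, hyS⟩ := hbasic x hx
    obtain ⟨w, hwS, hwe⟩ := exists_inv m hm S huS huU
    obtain ⟨z, rfl⟩ := hf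
    rw [sigma_mem]
    refine Or.inr ⟨w, hwS, x * u, hyS, u * (1 * z), ?_⟩
    have e1 : w * (x * u) = x := by
      rw [show w * (x * u) = x * (u * w) by ring, hwe, mul_one]
    have e2 : w * (u * (1 * z)) = 1 * z := by
      rw [show w * (u * (1 * z)) = (u * w) * (1 * z) by ring, hwe, one_mul]
    rw [e1, e2]
  -- backward direction
  have bwd : (∀ x ∈ mulClosure m S, Container m n k x 1 ⊆ SigmaG m n k S) →
      ∀ x ∈ mulClosure m S, (orb m S x ∩ S).Nonempty := by
    intro hcomp x hx
    by_cases hm1 : m = 1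
    · subst hm1
      refine ⟨x * 1, ⟨1, h1mem, isUnit_one, rfl⟩, ?_⟩
      have : x * 1 = 0 := Subsingleton.elim _ _
      rw [this]; exact hS.1
    · have hm2 : 1 < m := by omega
      have hmu : Mu m n k x 1 ∈ SigmaG m n k S := hcomp x hx ⟨1, by rw [mul_one]⟩
      rw [sigma_mem] at hmu
      rcases hmu with ⟨s, hs, z, he⟩ | ⟨t, ht, s, hs, z, he⟩
      · obtain ⟨hx1, -⟩ := mu_inj m n k hm2 hk hcop hind he
        exact ⟨x, ⟨1, h1mem, isUnit_one, (mul_one x).symm⟩, hx1 ▸ hs⟩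
      · obtain ⟨hx1, hz1⟩ := mu_inj m n k hm2 hk hcop hind he
        have htU : IsUnit t := IsUnit.of_mul_eq_one (a := t) z hz1.symm
        obtain ⟨w, hwS, hwe⟩ := exists_inv m hm S ht htU
        refine ⟨x * w, ⟨w, hwS, IsUnit.of_mul_eq_one (a := w) t (by rw [mul_comm]; exact hwe), rfl⟩, ?_⟩
        have : x * w = s := by
          rw [hx1, show t * s * w = s * (t * w) by ring, hwe, mul_one]
        rw [this]; exact hs
  refine ⟨⟨fwd, bwd⟩, ?_⟩
  intro hbasic
  have hcomp := fwd hbasic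
  have hset : SigmaG m n k S =
      {f | ∃ x ∈ mulClosure m S, ∃ z : ZMod m, f = Mu m n k x z} := by
    ext f
    constructor
    · rw [sigma_mem]
      rintro (⟨s, hs, z, rfl⟩ | ⟨t, ht, s, hs, z, rfl⟩)
      · exact ⟨s, Subsemigroup.subset_closure hs, z, rfl⟩
      · exact ⟨t * s, Subsemigroup.mul_mem _ ht (Subsemigroup.subset_closure hs), t * z, rfl⟩
    · rintro ⟨x, hx, z, rfl⟩
      exact hcomp x hx ⟨z, by rw [one_mul]⟩
  refine ⟨?_, ?_, ?_⟩
  · rw [hset]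
    ext f
    simp only [Set.mem_iUnion, Container, Set.mem_setOf_eq]
    constructor
    · rintro ⟨x, hx, z, rfl⟩
      exact ⟨x, hx, z, by rw [one_mul]⟩
    · rintro ⟨x, hx, z, rfl⟩
      exact ⟨x, hx, 1 * z, rfl⟩
  · intro x₁ h₁ x₂ h₂ hne
    rw [Set.disjoint_left]
    rintro f ⟨z₁, rfl⟩ ⟨z₂, he⟩
    by_cases hm1 : m = 1
    · subst hm1
      exact hne (Subsingleton.elim x₁ x₂)
    · exact hne (mu_inj m n k (by omega) hk hcop hind he).1
  · have himg : SigmaG m n k S =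
        (fun p : ZMod m × ZMod m => Mu m n k p.1 p.2) ''
          ((mulClosure m S) ×ˢ (Set.univ : Set (ZMod m))) := by
      rw [hset]
      ext f
      constructor
      · rintro ⟨x, hx, z, rfl⟩
        exact ⟨(x, z), ⟨hx, Set.mem_univ _⟩, rfl⟩
      · rintro ⟨⟨x, z⟩, ⟨hx, -⟩, rfl⟩
        exact ⟨x, hx, z, rfl⟩
    have hinj : Set.InjOn (fun p : ZMod m × ZMod m => Mu m n k p.1 p.2)
        ((mulClosure m S) ×ˢ (Set.univ : Set (ZMod m))) := by
      by_cases hm1 : m = 1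
      · subst hm1
        intro p _ q _ _
        exact Subsingleton.elim p q
      · intro p _ q _ he
        obtain ⟨e1, e2⟩ := mu_inj m n k (by omega) hk hcop hind he
        exact Prod.ext e1 e2
    rw [himg, Set.ncard_image_of_injOn hinj]
    have hprod : ((mulClosure m S) ×ˢ (Set.univ : Set (ZMod m))).ncard =
        (mulClosure m S).ncard * (Set.univ : Set (ZMod m)).ncard := by
      rw [← Nat.card_coe_set_eq, ← Nat.card_coe_set_eq, ← Nat.card_coe_set_eq,
        Nat.card_congr (Equiv.Set.prod _ _), Nat.card_prod]
    rw [hprod, Set.ncard_univ, Nat.card_zmod, mul_comm]
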